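/- Under the same hypotheses (ZX = q^{-2}XZ, ZY = q^2YZ, q^{-1}XY - qYX = (Z^2-1)/(q-q^{-1}), J = (qX - q^{-1}Y)Z^{-1}), one can recover X and Y from J and Z: X = (qJZ - q^{-1}ZJ)/(q^2 - q^{-2}) and Y = (q^{-1}JZ - qZJ)/(q^2 - q^{-2}). -/

import Mathlib

/-- Recovering `X` and `Y` from `J` and `Z`. -/
theorem stmt_3 {K A : Type*} [Field K] [Ring A] [Algebra K A]
    (q : K) (hq : q ≠ 0) (hq4 : q ^ 4 ≠ 1)
    (X Y : A) (Z : Aˣ)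
    (h1 : (Z : A) * X = (q⁻¹ ^ 2) • (X * (Z : A)))
    (h2 : (Z : A) * Y = (q ^ 2) • (Y * (Z : A)))
    (h3 : q⁻¹ • (X * Y) - q • (Y * X) = (q - q⁻¹)⁻¹ • ((Z : A) ^ 2 - 1))
    (J : A) (hJ : J = (q • X - q⁻¹ • Y) * ((Z⁻¹ : Aˣ) : A)) :
    X = (q ^ 2 - q⁻¹ ^ 2)⁻¹ • (q • (J * (Z : A)) - q⁻¹ • ((Z : A) * J)) ∧
    Y = (q ^ 2 - q⁻¹ ^ 2)⁻¹ • (q⁻¹ • (J * (Z : A)) - q • ((Z : A) * J)) := by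
  have hc : q ^ 2 - q⁻¹ ^ 2 ≠ 0 := by
    intro h
    apply hq4
    have h2 : q ^ 2 = q⁻¹ ^ 2 := by linear_combination h
    field_simp at h2
    calc q ^ 4 = q ^ 2 * q ^ 2 := by ring
    _ = 1 := by linear_combination h2
  have hJZ : J * (Z : A) = q • X - q⁻¹ • Y := by
    rw [hJ, mul_assoc, ← Units.val_mul, inv_mul_cancel, Units.val_one, mul_one]
  have hZJ : (Z : A) * J = q⁻¹ • X - q • Y := by
    rw [hJ, ← mul_assoc]
    have key : (Z : A) * (q • X - q⁻¹ • Y) = (q⁻¹ • X - q • Y) * (Z : A) := by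
      rw [mul_sub, sub_mul, mul_smul_comm, mul_smul_comm, h1, h2,
        smul_smul, smul_smul, smul_mul_assoc, smul_mul_assoc]
      match_scalars <;> field_simp <;> ring
    rw [key, mul_assoc, ← Units.val_mul, mul_inv_cancel, Units.val_one, mul_one]
  have hq4' : q ^ 4 - 1 ≠ 0 := sub_ne_zero.mpr hq4
  have h6 : -q ^ 2 + q ^ 6 ≠ 0 := by
    have : -q ^ 2 + q ^ 6 = q ^ 2 * (q ^ 4 - 1) := by ring
    rw [this]
    exact mul_ne_zero (pow_ne_zero _ hq) hq4'
  rw [hJZ, hZJ]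
  constructor
  · rw [eq_comm, inv_smul_eq_iff₀ hc]
    match_scalars <;> field_simp <;> ring
  · rw [eq_comm, inv_smul_eq_iff₀ hc]
    match_scalars <;> field_simp <;> ring
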